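/- arXiv:2010.08752 — 2 statements merged into one kernel-verified Lean document; each statement's English description precedes it below -/
import Mathlib

section
/- Let p ∈ L^∞(ℝⁿ) and let G = { e ∈ ℝⁿ : p(x+e) = p(x) for a.e. x ∈ ℝⁿ } be its group of periods. Suppose there is a sequence h_k ∈ G with h_k ≠ 0, h_k → 0, and h_k/|h_k| → ξ with |ξ| = 1. Then for every α ∈ ℝ one has p(x + αξ) = p(x) for a.e. x ∈ ℝⁿ; that is, the whole line ℝξ is contained in G. -/
open MeasureTheory Filter Metric Set
open scoped Topology ENNReal

noncomputable section

/-- Euclidean space ℝⁿ. -/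
abbrev Euc (n : ℕ) := EuclideanSpace ℝ (Fin n)

/-- Group of periods of a function `p ∈ L^∞(ℝⁿ)`:
`G = { e | p(x+e) = p(x) a.e. }`. -/
def periodGroup {n : ℕ} (p : Euc n → ℝ) : Set (Euc n) :=
  {e | ∀ᵐ x : Euc n, p (x + e) = p x}

/-- `p` is periodic: the linear hull of its group of periods is all of ℝⁿ. -/
def IsPeriodicFun {n : ℕ} (p : Euc n → ℝ) : Prop :=
  Submodule.span ℝ (periodGroup p) = ⊤

/-- Dual group `G' = { ξ | ξ·e ∈ ℤ for all e ∈ G }`. -/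
def dualGroup {n : ℕ} (G : Set (Euc n)) : Set (Euc n) :=
  {ξ | ∀ e ∈ G, ∃ k : ℤ, (inner ℝ ξ e : ℝ) = (k : ℝ)}

/-- `p` has mean value `m` (the mean over the period cell, characterized by
the limit of averages over large balls). -/
def HasMeanValue {n : ℕ} (p : Euc n → ℝ) (m : ℝ) : Prop :=
  Tendsto (fun R : ℝ =>
      (∫ x in ball (0 : Euc n) R, p x) / (volume (ball (0 : Euc n) R)).toReal)
    atTop (𝓝 m)

/-- `v` vanishes at infinity in the sense of measure: for every `λ > 0`
the superlevel set `{ |v| > λ }` has finite Lebesgue measure. -/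
def Vanishes {n : ℕ} (v : Euc n → ℝ) : Prop :=
  ∀ lam : ℝ, 0 < lam → volume {x : Euc n | lam < |v x|} < ⊤

/-- `g` is affine on the set `S`. -/
def AffineOn (g : ℝ → ℝ) (S : Set ℝ) : Prop :=
  ∃ a b : ℝ, ∀ u ∈ S, g u = a * u + b

/-- The set `F`: points `u` such that for every nonzero `ξ ∈ G'` the function
`w ↦ φ(w)·ξ` is not affine on any neighborhood of `u`; in the degenerate case
`G' = {0}`, the points where the whole vector `φ` is not affine near `u`. -/
def Fset {n : ℕ} (φ : ℝ → Euc n) (G : Set (Euc n)) : Set ℝ :=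
  {u | (∀ ξ ∈ dualGroup G, ξ ≠ 0 → ∀ ε > (0:ℝ),
          ¬ AffineOn (fun w => (inner ℝ (φ w) ξ : ℝ)) (Ioo (u - ε) (u + ε)))
    ∧ (dualGroup G = {0} → ∀ ε > (0:ℝ),
          ¬ ∃ a b : Euc n, ∀ w ∈ Ioo (u - ε) (u + ε), φ w = w • a + b)}

/-- The shift-invariant norm `‖v‖_X = sup_y ∫_{|x-y|<1} |v(x)| dx`. -/
def normX {n : ℕ} (v : Euc n → ℝ) : ℝ :=
  ⨆ y : Euc n, ∫ x in ball y 1, |v x|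

/-- Kruzhkov entropy solution of `u_t + div_x φ(u) = 0`, `u(0,·) = u₀`. -/
def IsEntropySol {n : ℕ} (φ : ℝ → Euc n) (u₀ : Euc n → ℝ) (u : ℝ → Euc n → ℝ) : Prop :=
  Measurable (Function.uncurry u) ∧ (∃ C : ℝ, ∀ t x, |u t x| ≤ C) ∧
  (∀ k : ℝ, ∀ f : ℝ × Euc n → ℝ, ContDiff ℝ 1 f → HasCompactSupport f →
    (∀ z, 0 ≤ f z) → (∀ z : ℝ × Euc n, z.1 ≤ 0 → f z = 0) →
    0 ≤ ∫ z : ℝ × Euc n,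
      (|u z.1 z.2 - k| * fderiv ℝ f z (1, 0)
        + Real.sign (u z.1 z.2 - k) *
            ∑ i, (φ (u z.1 z.2) i - φ k i) * fderiv ℝ f z (0, EuclideanSpace.single i 1))) ∧
  (∀ K : Set (Euc n), IsCompact K →
    Tendsto (fun t => ∫ x in K, |u t x - u₀ x|)
      ((𝓝[>] (0:ℝ)) ⊓ ae (volume : Measure ℝ)) (𝓝 0))

namespace LineAux

lemma ae_shift {n : ℕ} {P : Euc n → Prop} (h : ∀ᵐ x : Euc n, P x) (c : Euc n) :
    ∀ᵐ x : Euc n, P (x + c) :=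
  (measurePreserving_add_right (volume : Measure (Euc n)) c).quasiMeasurePreserving.ae h

lemma zero_mem {n : ℕ} (p : Euc n → ℝ) : (0 : Euc n) ∈ periodGroup p := by
  show ∀ᵐ x : Euc n, p (x + 0) = p x
  filter_upwards with x; rw [add_zero]

lemma add_mem {n : ℕ} {p : Euc n → ℝ} {e f : Euc n}
    (he : e ∈ periodGroup p) (hf : f ∈ periodGroup p) : e + f ∈ periodGroup p := by
  have h1 : ∀ᵐ x : Euc n, p (x + e + f) = p (x + e) := ae_shift hf e
  filter_upwards [he, h1] with x hx h1x
  rw [← add_assoc, h1x, hx]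

lemma neg_mem {n : ℕ} {p : Euc n → ℝ} {e : Euc n}
    (he : e ∈ periodGroup p) : -e ∈ periodGroup p := by
  have h1 : ∀ᵐ x : Euc n, p (x + -e + e) = p (x + -e) := ae_shift he (-e)
  show ∀ᵐ x : Euc n, p (x + -e) = p x
  filter_upwards [h1] with x h1x
  have hxx : x + -e + e = x := by abel
  rw [hxx] at h1x
  exact h1x.symm

def PG {n : ℕ} (p : Euc n → ℝ) : AddSubgroup (Euc n) where
  carrier := periodGroup p
  zero_mem' := zero_mem p
  add_mem' := add_mem
  neg_mem' := neg_mem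

def trMap {n : ℕ} (c : Euc n) : C(Euc n, Euc n) := ⟨fun x => x + c, by continuity⟩

/-- The period group is closed. -/
lemma closed_mem {n : ℕ} {p : Euc n → ℝ}
    (hpm : Measurable p) (hpb : ∃ C : ℝ, ∀ x, |p x| ≤ C)
    (v : ℕ → Euc n) (hv : ∀ j, v j ∈ periodGroup p)
    (w : Euc n) (hlim : Tendsto v atTop (𝓝 w)) : w ∈ periodGroup p := by
  obtain ⟨C, hC⟩ := hpb
  -- reduce to: a.e. on each ball
  have key : ∀ R : ℕ, ∀ᵐ x : Euc n, x ∈ ball (0 : Euc n) (R : ℝ) → p (x + w) = p x := by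
    intro R
    set M : ℝ := (R : ℝ) + ‖w‖ + 2 with hM
    set q : Euc n → ℝ := (ball (0 : Euc n) M).indicator p with hq
    have hqi : Integrable q (volume : Measure (Euc n)) := by
      have hpC : ∀ᵐ x ∂((volume : Measure (Euc n)).restrict (ball 0 M)), ‖p x‖ ≤ C :=
        ae_of_all _ fun x => by rw [Real.norm_eq_abs]; exact hC x
      exact (Measure.integrableOn_of_bounded measure_ball_lt_top.ne
        hpm.aestronglyMeasurable hpC).integrable_indicator measurableSet_ball
    set Q : Lp ℝ 1 (volume : Measure (Euc n)) := hqi.toL1 q with hQ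
    set T : Euc n → Lp ℝ 1 (volume : Measure (Euc n)) :=
      fun c => Lp.compMeasurePreserving (μ := volume) (trMap c)
        (measurePreserving_add_right volume c) Q with hT
    have hTcont : Continuous T :=
      Continuous.compMeasurePreservingLp continuous_const
        (ContinuousMap.continuous_of_continuous_uncurry _ (continuous_snd.add continuous_fst))
        _ ENNReal.one_ne_top
    have hTc : ∀ c : Euc n, T c =ᵐ[volume] fun x => q (x + c) := by
      intro c
      simp only [hT]
      have h1 : ∀ᵐ x : Euc n, Q x = q x := hqi.coeFn_toL1
      have h2 : ∀ᵐ x : Euc n, Q (x + c) = q (x + c) := ae_shift h1 c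
      filter_upwards [Lp.coeFn_compMeasurePreserving (f := ⇑(trMap c)) (μ := volume) Q
        (measurePreserving_add_right volume c), h2] with x hx h2x
      rw [hx]; exact h2x
    -- distance function
    have hD : Tendsto (fun j => eLpNorm (⇑(T w) - ⇑(T (v j))) 1 volume) atTop (𝓝 0) := by
      have h1 : Tendsto (fun j => T (v j)) atTop (𝓝 (T w)) :=
        (hTcont.tendsto w).comp hlim
      have h2 : Tendsto (fun j => edist (T w) (T (v j))) atTop (𝓝 (edist (T w) (T w))) :=
        tendsto_const_nhds.edist h1
      simpa only [Lp.edist_def, edist_self] using h2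
    -- the quantity A
    set A : ℝ≥0∞ := ∫⁻ x in ball (0 : Euc n) (R : ℝ), ‖p (x + w) - p x‖₊ with hA
    have hAle : ∀ᶠ j in atTop, A ≤ eLpNorm (⇑(T w) - ⇑(T (v j))) 1 volume := by
      have hnear : ∀ᶠ j in atTop, ‖v j - w‖ ≤ 1 := by
        filter_upwards [hlim (Metric.ball_mem_nhds w one_pos)] with j hj
        exact le_of_lt (by simpa [dist_eq_norm] using hj)
      filter_upwards [hnear] with j hj
      -- step 1: replace p x by p (x + v j) a.e.
      have step1 : A = ∫⁻ x in ball (0 : Euc n) (R : ℝ), ‖p (x + w) - p (x + v j)‖₊ := by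
        refine lintegral_congr_ae (ae_restrict_of_ae ?_)
        filter_upwards [hv j] with x hx
        rw [hx]
      -- step 2: on the ball, p agrees with q at both shifted points
      have step2 : (∫⁻ x in ball (0 : Euc n) (R : ℝ), ‖p (x + w) - p (x + v j)‖₊)
          = ∫⁻ x in ball (0 : Euc n) (R : ℝ), ‖q (x + w) - q (x + v j)‖₊ := by
        refine setLIntegral_congr_fun measurableSet_ball ?_
        intro x hx
        have hxR : ‖x‖ < (R : ℝ) := by simpa using mem_ball_zero_iff.mp hx
        have h1 : x + w ∈ ball (0 : Euc n) M := by
          rw [mem_ball_zero_iff]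
          calc ‖x + w‖ ≤ ‖x‖ + ‖w‖ := norm_add_le _ _
            _ < M := by rw [hM]; linarith
        have h2 : x + v j ∈ ball (0 : Euc n) M := by
          rw [mem_ball_zero_iff]
          have : ‖v j‖ ≤ ‖w‖ + 1 := by
            calc ‖v j‖ = ‖(v j - w) + w‖ := by rw [sub_add_cancel]
              _ ≤ ‖v j - w‖ + ‖w‖ := norm_add_le _ _
              _ ≤ 1 + ‖w‖ := by linarith
              _ = ‖w‖ + 1 := by ring
          calc ‖x + v j‖ ≤ ‖x‖ + ‖v j‖ := norm_add_le _ _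
            _ < M := by rw [hM]; linarith
        beta_reduce
        rw [hq, indicator_of_mem h1, indicator_of_mem h2]
      -- step 3: compare with the L¹ norm
      have step3 : (∫⁻ x in ball (0 : Euc n) (R : ℝ), ‖q (x + w) - q (x + v j)‖₊)
          ≤ eLpNorm (⇑(T w) - ⇑(T (v j))) 1 volume := by
        have hcong : eLpNorm (⇑(T w) - ⇑(T (v j))) 1 volume
            = eLpNorm (fun x => q (x + w) - q (x + v j)) 1 volume := by
          refine eLpNorm_congr_ae ?_
          filter_upwards [hTc w, hTc (v j)] with x h1 h2
          simp [Pi.sub_apply, h1, h2]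
        rw [hcong, eLpNorm_one_eq_lintegral_enorm]
        exact setLIntegral_le_lintegral _ _
      calc A = _ := step1
        _ = _ := step2
        _ ≤ _ := step3
    have hA0 : A = 0 := le_antisymm (ge_of_tendsto hD hAle) zero_le
    -- conclude a.e. equality on the ball
    have hmz : Measurable fun x : Euc n => (‖p (x + w) - p x‖₊ : ℝ≥0∞) := by
      apply Measurable.coe_nnreal_ennreal
      exact ((hpm.comp (measurable_add_const w)).sub hpm).nnnorm
    have hev := (lintegral_eq_zero_iff hmz).mp hA0
    have h2 : ∀ᵐ x ∂((volume : Measure (Euc n)).restrict (ball 0 (R : ℝ))),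
        p (x + w) = p x := by
      filter_upwards [hev] with x hx
      have hx' : (‖p (x + w) - p x‖₊ : ℝ≥0∞) = 0 := hx
      rw [ENNReal.coe_eq_zero, nnnorm_eq_zero, sub_eq_zero] at hx'
      exact hx'
    rw [ae_restrict_iff' measurableSet_ball] at h2
    exact h2
  have hall : ∀ᵐ x : Euc n, ∀ R : ℕ, x ∈ ball (0 : Euc n) (R : ℝ) → p (x + w) = p x :=
    ae_all_iff.mpr key
  filter_upwards [hall] with x hx
  obtain ⟨R, hR⟩ := exists_nat_gt ‖x‖
  exact hx R (mem_ball_zero_iff.mpr hR)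

end LineAux

namespace LineAux

lemma zsmul_mem {n : ℕ} {p : Euc n → ℝ} {e : Euc n} (he : e ∈ periodGroup p) (m : ℤ) :
    m • e ∈ periodGroup p :=
  AddSubgroup.zsmul_mem (PG p) he m

end LineAux

/-- key step of Lemma 1(i) of the paper: if nonzero periods
`h_k → 0` of `p ∈ L^∞(ℝⁿ)` have directions `h_k/|h_k|` converging to a unit
vector `ξ`, then the whole line `ℝξ` consists of periods of `p`. -/
theorem line_of_periods
    {n : ℕ} (p : Euc n → ℝ)
    (hpm : Measurable p) (hpb : ∃ C : ℝ, ∀ x, |p x| ≤ C)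
    (h : ℕ → Euc n)
    (hhG : ∀ k, h k ∈ periodGroup p) (hh0 : ∀ k, h k ≠ 0)
    (hlim : Tendsto h atTop (𝓝 0))
    (ξ : Euc n) (hξ : ‖ξ‖ = 1)
    (hdir : Tendsto (fun k => ‖h k‖⁻¹ • h k) atTop (𝓝 ξ)) :
    ∀ α : ℝ, α • ξ ∈ periodGroup p := by
  intro α
  have hnorm : ∀ k, (0:ℝ) < ‖h k‖ := fun k => norm_pos_iff.mpr (hh0 k)
  set v : ℕ → Euc n := fun k => (⌊α / ‖h k‖⌋ : ℤ) • h k with hv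
  have hvG : ∀ k, v k ∈ periodGroup p := fun k => LineAux.zsmul_mem (hhG k) _
  -- v k = s k • (unit vector)
  have hvk : ∀ k, v k = ((⌊α / ‖h k‖⌋ : ℝ) * ‖h k‖) • (‖h k‖⁻¹ • h k) := by
    intro k
    rw [smul_smul, mul_assoc, mul_inv_cancel₀ (hnorm k).ne', mul_one, hv]
    exact (Int.cast_smul_eq_zsmul ℝ (⌊α / ‖h k‖⌋) (h k)).symm
  have hs : Tendsto (fun k => (⌊α / ‖h k‖⌋ : ℝ) * ‖h k‖) atTop (𝓝 α) := by
    have hnz : Tendsto (fun k => ‖h k‖) atTop (𝓝 0) := by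
      simpa using hlim.norm
    have hbound : ∀ k, ‖(⌊α / ‖h k‖⌋ : ℝ) * ‖h k‖ - α‖ ≤ ‖h k‖ := by
      intro k
      have hk := hnorm k
      have h1 : (⌊α / ‖h k‖⌋ : ℝ) ≤ α / ‖h k‖ := Int.floor_le _
      have h2 : α / ‖h k‖ - 1 < (⌊α / ‖h k‖⌋ : ℝ) := by
        have := Int.lt_floor_add_one (α / ‖h k‖); linarith
      rw [Real.norm_eq_abs, abs_le]
      constructor
      · have := (mul_le_mul_of_nonneg_right h2.le hk.le)
        rw [sub_mul, div_mul_cancel₀ _ hk.ne', one_mul] at this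
        linarith
      · have := (mul_le_mul_of_nonneg_right h1 hk.le)
        rw [div_mul_cancel₀ _ hk.ne'] at this
        linarith [hk.le]
    have : Tendsto (fun k => (⌊α / ‖h k‖⌋ : ℝ) * ‖h k‖ - α) atTop (𝓝 0) :=
      squeeze_zero_norm hbound hnz
    have := this.add_const α
    simpa using this
  have hvlim : Tendsto v atTop (𝓝 (α • ξ)) := by
    have := hs.smul hdir
    simpa [← hvk] using this
  exact LineAux.closed_mem hpm hpb v hvG _ hvlim

end
end

section
/- Let G ⊂ ℝⁿ be the group of periods of a periodic function, ξ ∈ G' nonzero with ξ(G) = rℤ (r ∈ ℕ), e₀ ∈ G with ξ·e₀ = r, E = ker ξ, and G₁ = E ∩ G. Let v ∈ C(E) be periodic with group of periods exactly G₁ and with zero mean value, let m ∈ ℝ, δ > 0, and define u₀(x) = m + v(pr(x)) + (δ/2) sin(2π ξ·x / r), where pr(x) ∈ E is the projection of x onto E along the vector e₀ (i.e. x − pr(x) is parallel to e₀). Then the group of periods of u₀ is exactly G = G₁ + ℤe₀, and the mean value of u₀ equals m. -/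
open MeasureTheory Filter Metric Set
open scoped Topology ENNReal

noncomputable section

/-- Shifting an a.e. property by a translation. -/
lemma ae_shift_aux {n : ℕ} {Q : Euc n → Prop} (h : ∀ᵐ x : Euc n, Q x) (a : Euc n) :
    ∀ᵐ x : Euc n, Q (x + a) :=
  (measurePreserving_add_right (volume : Measure (Euc n)) a).quasiMeasurePreserving.ae h

/-- The group of periods as an additive subgroup. -/
def periodSubgroup {n : ℕ} (p : Euc n → ℝ) : AddSubgroup (Euc n) where
  carrier := periodGroup p
  zero_mem' := by
    show ∀ᵐ x : Euc n, p (x + 0) = p x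
    filter_upwards with x
    simp
  add_mem' := by
    intro a b ha hb
    have ha0 : ∀ᵐ x : Euc n, p (x + a) = p x := ha
    have hb0 : ∀ᵐ x : Euc n, p (x + b) = p x := hb
    have ha' := ae_shift_aux ha0 b
    show ∀ᵐ x : Euc n, p (x + (a + b)) = p x
    filter_upwards [ha', hb0] with x h1 h2
    calc p (x + (a + b)) = p (x + b + a) := by rw [show x + (a + b) = x + b + a by abel]
      _ = p (x + b) := h1
      _ = p x := h2
  neg_mem' := by
    intro a ha
    have ha0 : ∀ᵐ x : Euc n, p (x + a) = p x := ha
    have ha' := ae_shift_aux ha0 (-a)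
    show ∀ᵐ x : Euc n, p (x + -a) = p x
    filter_upwards [ha'] with x h1
    have : p (x + -a + a) = p (x + -a) := h1
    simpa using this.symm

lemma mem_periodSubgroup_iff {n : ℕ} (p : Euc n → ℝ) (e : Euc n) :
    e ∈ periodSubgroup p ↔ e ∈ periodGroup p := Iff.rfl

/-- Integral of an odd function over a centered ball vanishes. -/
lemma integral_ball_odd {n : ℕ} (f : Euc n → ℝ) (hodd : ∀ x, f (-x) = - f x) (R : ℝ) :
    ∫ x in ball (0 : Euc n) R, f x = 0 := by
  have hB : MeasurableSet (ball (0 : Euc n) R) := measurableSet_ball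
  rw [← integral_indicator hB]
  set g := (ball (0 : Euc n) R).indicator f with hg
  have h1 : ∀ x, g (-x) = - g x := by
    intro x
    by_cases hx : x ∈ ball (0 : Euc n) R
    · have hx' : -x ∈ ball (0 : Euc n) R := by
        simpa [mem_ball_zero_iff] using hx
      simp [hg, indicator_of_mem, hx, hx', hodd]
    · have hx' : -x ∉ ball (0 : Euc n) R := by
        simpa [mem_ball_zero_iff] using hx
      simp [hg, indicator_of_notMem, hx, hx']
  have h2 : ∫ x, g x = - ∫ x, g x := by
    conv_lhs => rw [← integral_neg_eq_self g volume]
    simp only [h1]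
    exact integral_neg g
  linarith

/-- the counterexample initial data
`u₀(x) = m + v(pr(x)) + (δ/2) sin(2π ξ·x / r)` (where `pr` is the projection
onto the hyperplane `E = ker ξ` along `e₀`, formalized via the function
`w = v ∘ pr` on ℝⁿ, constant along `e₀`, with group of periods exactly
`G₁ + ℝe₀` and zero mean) has group of periods exactly `G = G₁ + ℤe₀` and
mean value `m`. -/
theorem counterexample_initial_data
    {n : ℕ} (p : Euc n → ℝ)
    (hpm : Measurable p) (hpb : ∃ C : ℝ, ∀ x, |p x| ≤ C)
    (hper : IsPeriodicFun p)
    (ξ : Euc n) (hξG : ξ ∈ dualGroup (periodGroup p)) (hξ0 : ξ ≠ 0)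
    (r : ℕ) (hr : 0 < r)
    (hrange : (fun e => (inner ℝ ξ e : ℝ)) '' periodGroup p
      = {s : ℝ | ∃ k : ℤ, s = (r : ℝ) * k})
    (e₀ : Euc n) (he₀ : e₀ ∈ periodGroup p) (he₀r : (inner ℝ ξ e₀ : ℝ) = r)
    (w : Euc n → ℝ) (hw : Continuous w)
    -- `w = v ∘ pr`: `w` is invariant under the projection onto `E` along `e₀`
    (hwproj : ∀ x : Euc n, w (x - ((inner ℝ ξ x : ℝ) / r) • e₀) = w x)
    -- the group of periods of `w` is exactly `G₁ ⊕ ℝe₀`, i.e. the group of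
    -- periods of `v` on `E` is exactly `G₁ = ker ξ ∩ G`
    (hwper : {e : Euc n | ∀ x, w (x + e) = w x}
      = {e : Euc n | ∃ e₁ ∈ periodGroup p,
          (inner ℝ ξ e₁ : ℝ) = 0 ∧ ∃ t : ℝ, e = e₁ + t • e₀})
    -- `v` has zero mean value
    (hwmean : HasMeanValue w 0)
    (m δ : ℝ) (hδ : 0 < δ) :
    periodGroup (fun x : Euc n =>
        m + w x + δ / 2 * Real.sin (2 * Real.pi * (inner ℝ ξ x : ℝ) / r))
      = {e : Euc n | ∃ e₁ ∈ periodGroup p,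
          (inner ℝ ξ e₁ : ℝ) = 0 ∧ ∃ k : ℤ, e = e₁ + k • e₀} ∧
    periodGroup (fun x : Euc n =>
        m + w x + δ / 2 * Real.sin (2 * Real.pi * (inner ℝ ξ x : ℝ) / r))
      = periodGroup p ∧
    HasMeanValue (fun x : Euc n =>
        m + w x + δ / 2 * Real.sin (2 * Real.pi * (inner ℝ ξ x : ℝ) / r)) m := by
  classical
  have hrne : (r : ℝ) ≠ 0 := Nat.cast_ne_zero.mpr hr.ne'
  have hπ : (0:ℝ) < 2 * Real.pi := by positivity
  set U : Euc n → ℝ := fun x : Euc n =>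
      m + w x + δ / 2 * Real.sin (2 * Real.pi * (inner ℝ ξ x : ℝ) / r) with hUdef
  -- `w` is invariant along the direction `e₀`
  have winv : ∀ (x : Euc n) (t : ℝ), w (x + t • e₀) = w x := by
    intro x t
    have h1 := hwproj (x + t • e₀)
    have key : (x + t • e₀) - (((inner ℝ ξ (x + t • e₀) : ℝ)) / r) • e₀
        = x - ((inner ℝ ξ x : ℝ) / r) • e₀ := by
      rw [inner_add_right, real_inner_smul_right, he₀r,
        show ((inner ℝ ξ x : ℝ) + t * r) / r = (inner ℝ ξ x : ℝ) / r + t by field_simp]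
      rw [add_smul]
      abel
    rw [key, hwproj x] at h1
    exact h1.symm
  -- the set `G₁ + ℤ e₀` equals the period group of `p`
  have hSG : {e : Euc n | ∃ e₁ ∈ periodGroup p,
      (inner ℝ ξ e₁ : ℝ) = 0 ∧ ∃ k : ℤ, e = e₁ + k • e₀} = periodGroup p := by
    ext e
    constructor
    · rintro ⟨e₁, he₁, hξ₁, k, rfl⟩
      have h1 : e₁ ∈ periodSubgroup p := he₁
      have h2 : e₀ ∈ periodSubgroup p := he₀
      show e₁ + k • e₀ ∈ periodSubgroup p
      exact add_mem h1 (zsmul_mem h2 k)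
    · intro he
      have hmem : (inner ℝ ξ e : ℝ) ∈ {s : ℝ | ∃ k : ℤ, s = (r : ℝ) * k} := by
        rw [← hrange]; exact ⟨e, he, rfl⟩
      obtain ⟨k, hk⟩ := hmem
      have h1 : e ∈ periodSubgroup p := he
      have h2 : e₀ ∈ periodSubgroup p := he₀
      have h3 : e - k • e₀ ∈ periodSubgroup p := sub_mem h1 (zsmul_mem h2 k)
      refine ⟨e - k • e₀, h3, ?_, k, by abel⟩
      rw [inner_sub_right, ← Int.cast_smul_eq_zsmul ℝ, real_inner_smul_right, he₀r, hk]
      ring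
  have hinner_cont : Continuous fun x : Euc n => (inner ℝ ξ x : ℝ) :=
    continuous_const.inner continuous_id
  have hUc : Continuous U := by
    apply (continuous_const.add hw).add
    exact continuous_const.mul
      (Real.continuous_sin.comp ((continuous_const.mul hinner_cont).div_const _))
  -- the period group of `U` equals `G₁ + ℤ e₀`
  have hUS : periodGroup U = {e : Euc n | ∃ e₁ ∈ periodGroup p,
      (inner ℝ ξ e₁ : ℝ) = 0 ∧ ∃ k : ℤ, e = e₁ + k • e₀} := by
    ext e
    constructor
    · intro he
      have hc1 : Continuous fun x : Euc n => U (x + e) :=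
        hUc.comp (continuous_id.add continuous_const)
      have he' : (fun x : Euc n => U (x + e)) =ᵐ[volume] U := he
      have heq : ∀ x, U (x + e) = U x := fun x =>
        congrFun ((hc1.ae_eq_iff_eq volume hUc).mp he') x
      -- the key functional identity
      have key : ∀ (x : Euc n) (ψ : ℝ),
          w (x + e) + δ / 2 * Real.sin (ψ + 2 * Real.pi * (inner ℝ ξ e : ℝ) / r)
            = w x + δ / 2 * Real.sin ψ := by
        intro x ψ
        set t : ℝ := (ψ * r / (2 * Real.pi) - (inner ℝ ξ x : ℝ)) / r with ht
        have h1 : (inner ℝ ξ (x + t • e₀) : ℝ) = ψ * r / (2 * Real.pi) := by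
          rw [inner_add_right, real_inner_smul_right, he₀r, ht]
          field_simp
          ring
        have h := heq (x + t • e₀)
        simp only [hUdef] at h
        have hw1 : w (x + t • e₀ + e) = w (x + e) := by
          rw [show x + t • e₀ + e = (x + e) + t • e₀ by abel, winv]
        have hw2 : w (x + t • e₀) = w x := winv x t
        have h2 : (inner ℝ ξ (x + t • e₀ + e) : ℝ)
            = ψ * r / (2 * Real.pi) + (inner ℝ ξ e : ℝ) := by
          rw [inner_add_right, h1]
        rw [hw1, hw2, h1, h2] at h
        have e1 : 2 * Real.pi * (ψ * r / (2 * Real.pi) + (inner ℝ ξ e : ℝ)) / r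
            = ψ + 2 * Real.pi * (inner ℝ ξ e : ℝ) / r := by
          field_simp
        have e2 : 2 * Real.pi * (ψ * r / (2 * Real.pi)) / r = ψ := by field_simp
        rw [e1, e2] at h
        linarith
      have hA : ∀ x : Euc n,
          w (x + e) + δ / 2 * Real.cos (2 * Real.pi * (inner ℝ ξ e : ℝ) / r)
            = w x + δ / 2 := by
        intro x
        have h := key x (Real.pi / 2)
        rwa [show Real.pi / 2 + 2 * Real.pi * (inner ℝ ξ e : ℝ) / r
            = 2 * Real.pi * (inner ℝ ξ e : ℝ) / r + Real.pi / 2 by ring,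
          Real.sin_add_pi_div_two, Real.sin_pi_div_two, mul_one] at h
      have hB : ∀ x : Euc n,
          w (x + e) - δ / 2 * Real.cos (2 * Real.pi * (inner ℝ ξ e : ℝ) / r)
            = w x - δ / 2 := by
        intro x
        have h := key x (-(Real.pi / 2))
        rw [show -(Real.pi / 2) + 2 * Real.pi * (inner ℝ ξ e : ℝ) / r
            = 2 * Real.pi * (inner ℝ ξ e : ℝ) / r - Real.pi / 2 by ring,
          Real.sin_sub_pi_div_two, Real.sin_neg, Real.sin_pi_div_two, mul_neg_one] at h
        linarith
      have hwpere : ∀ x, w (x + e) = w x := fun x => by linarith [hA x, hB x]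
      have hcos : Real.cos (2 * Real.pi * (inner ℝ ξ e : ℝ) / r) = 1 := by
        have h1 := hA 0
        have h2 := hwpere 0
        have hδ2 : (δ / 2 : ℝ) ≠ 0 := by positivity
        apply mul_left_cancel₀ hδ2
        rw [mul_one]
        linarith
      obtain ⟨kk, hkk⟩ := (Real.cos_eq_one_iff _).mp hcos
      have hξe : (inner ℝ ξ e : ℝ) = (kk : ℝ) * r := by
        rw [eq_div_iff hrne] at hkk
        have h3 : 2 * Real.pi * (inner ℝ ξ e : ℝ) = 2 * Real.pi * ((kk : ℝ) * r) := by
          rw [← hkk]; ring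
        exact mul_left_cancel₀ hπ.ne' h3
      have hmem : e ∈ {e : Euc n | ∀ x, w (x + e) = w x} := hwpere
      rw [hwper] at hmem
      obtain ⟨e₁, he₁G, hξ₁, t, het⟩ := hmem
      have htk : t = (kk : ℝ) := by
        have h4 : (inner ℝ ξ e : ℝ) = t * r := by
          rw [het, inner_add_right, hξ₁, real_inner_smul_right, he₀r]; ring
        exact mul_right_cancel₀ hrne (h4.symm.trans hξe)
      exact ⟨e₁, he₁G, hξ₁, kk, by rw [het, htk, Int.cast_smul_eq_zsmul]⟩
    · rintro ⟨e₁, he₁G, hξ₁, k, rfl⟩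
      have hwp : ∀ x, w (x + (e₁ + k • e₀)) = w x := by
        have hmem : (e₁ + (k : ℤ) • e₀) ∈ {e : Euc n | ∀ x, w (x + e) = w x} := by
          rw [hwper]
          exact ⟨e₁, he₁G, hξ₁, (k : ℝ), by rw [Int.cast_smul_eq_zsmul]⟩
        exact hmem
      show ∀ᵐ x : Euc n, U (x + (e₁ + k • e₀)) = U x
      refine Filter.Eventually.of_forall fun x => ?_
      have hin : (inner ℝ ξ (x + (e₁ + k • e₀)) : ℝ) = (inner ℝ ξ x : ℝ) + (k : ℝ) * r := by
        rw [inner_add_right, inner_add_right, hξ₁, ← Int.cast_smul_eq_zsmul ℝ,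
          real_inner_smul_right, he₀r]
        ring
      simp only [hUdef]
      rw [hwp, hin, show 2 * Real.pi * ((inner ℝ ξ x : ℝ) + (k : ℝ) * r) / r
          = 2 * Real.pi * (inner ℝ ξ x : ℝ) / r + (k : ℝ) * (2 * Real.pi) by
            field_simp,
        Real.sin_add_int_mul_two_pi]
  -- the mean value of `U` is `m`
  have hmean : Tendsto (fun R : ℝ =>
      (∫ x in ball (0 : Euc n) R, U x) / (volume (ball (0 : Euc n) R)).toReal)
      atTop (𝓝 m) := by
    have hscont : Continuous fun x : Euc n =>
        Real.sin (2 * Real.pi * (inner ℝ ξ x : ℝ) / r) :=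
      Real.continuous_sin.comp ((continuous_const.mul hinner_cont).div_const _)
    have hwint : ∀ R : ℝ, IntegrableOn w (ball (0 : Euc n) R) volume := fun R =>
      (hw.locallyIntegrable.integrableOn_isCompact (isCompact_closedBall _ _)).mono_set
        ball_subset_closedBall
    have hsint : ∀ R : ℝ, IntegrableOn
        (fun x : Euc n => Real.sin (2 * Real.pi * (inner ℝ ξ x : ℝ) / r))
        (ball (0 : Euc n) R) volume := fun R =>
      (hscont.locallyIntegrable.integrableOn_isCompact (isCompact_closedBall _ _)).mono_set
        ball_subset_closedBall
    have hs0 : ∀ R : ℝ, ∫ x in ball (0 : Euc n) R,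
        Real.sin (2 * Real.pi * (inner ℝ ξ x : ℝ) / r) = 0 := by
      intro R
      apply integral_ball_odd
      intro x
      rw [inner_neg_right, show 2 * Real.pi * (-(inner ℝ ξ x : ℝ)) / r
          = -(2 * Real.pi * (inner ℝ ξ x : ℝ) / r) by ring, Real.sin_neg]
    have hev : (fun R : ℝ => m + (∫ x in ball (0 : Euc n) R, w x) /
          (volume (ball (0 : Euc n) R)).toReal)
        =ᶠ[atTop] fun R : ℝ => (∫ x in ball (0 : Euc n) R, U x) /
          (volume (ball (0 : Euc n) R)).toReal := by
      filter_upwards [eventually_gt_atTop (0:ℝ)] with R hR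
      have hVfin : volume (ball (0 : Euc n) R) ≠ ⊤ := measure_ball_lt_top.ne
      have hV0 : (volume (ball (0 : Euc n) R)).toReal ≠ 0 :=
        (ENNReal.toReal_pos (measure_ball_pos volume 0 hR).ne' hVfin).ne'
      have hconst : IntegrableOn (fun _ : Euc n => m) (ball (0 : Euc n) R) volume :=
        (integrableOn_const_iff).mpr (Or.inr measure_ball_lt_top)
      have hsplit : ∫ x in ball (0 : Euc n) R, U x
          = (volume (ball (0 : Euc n) R)).toReal * m
            + ∫ x in ball (0 : Euc n) R, w x := by
        simp only [hUdef]
        have hint1 : IntegrableOn (fun x : Euc n => m + w x) (ball (0 : Euc n) R) volume :=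
          hconst.add (hwint R)
        rw [integral_add hint1 ((hsint R).const_mul _),
          integral_add hconst (hwint R), integral_const_mul, hs0, setIntegral_const]
        simp only [smul_eq_mul, mul_zero, add_zero]
        rfl
      rw [hsplit, add_div, mul_comm, mul_div_assoc, div_self hV0, mul_one]
    have hlim : Tendsto (fun R : ℝ => m + (∫ x in ball (0 : Euc n) R, w x) /
        (volume (ball (0 : Euc n) R)).toReal) atTop (𝓝 (m + 0)) :=
      tendsto_const_nhds.add hwmean
    rw [add_zero] at hlim
    exact hlim.congr' hev
  exact ⟨hUS, hUS.trans hSG, hmean⟩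

end
end
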